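/- arXiv:1207.1638 — 2 statements merged into one kernel-verified Lean document; each statement's English description precedes it below -/
import Mathlib

section
/- A cancellative semigroup that embeds in a nilpotent group of class n is Malcev nilpotent of class at most n. In particular, every nilpotent group of class n, viewed as a semigroup, is Malcev nilpotent of class n. -/
/-- The Malcev sequences: `(malcevLR x y z n).1 = λ_n`, `(malcevLR x y z n).2 = ρ_n`,
with `λ_0 = x`, `ρ_0 = y`, `λ_{k+1} = λ_k z_k ρ_k`, `ρ_{k+1} = ρ_k z_k λ_k`. -/
def malcevLR {α : Type*} [Mul α] (x y : α) (z : ℕ → α) : ℕ → α × α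
  | 0 => (x, y)
  | n+1 => ((malcevLR x y z n).1 * z n * (malcevLR x y z n).2,
            (malcevLR x y z n).2 * z n * (malcevLR x y z n).1)

/-- A semigroup is Malcev nilpotent of class at most `n` if `λ_n = ρ_n` identically,
with the interlacing elements taken from `S¹ = WithOne S`. -/
def MalcevClassLe (S : Type*) [Semigroup S] (n : ℕ) : Prop :=
  ∀ (a b : S) (c : ℕ → WithOne S),
    (malcevLR (a : WithOne S) (b : WithOne S) c n).1 =
    (malcevLR (a : WithOne S) (b : WithOne S) c n).2

/-- Malcev nilpotency. -/
def MalcevNilpotent (S : Type*) [Semigroup S] : Prop :=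
  ∃ n, 1 ≤ n ∧ MalcevClassLe S n

/-- A (two-sided, nonempty) ideal of a semigroup. -/
def IsIdeal {S : Type*} [Mul S] (I : Set S) : Prop :=
  I.Nonempty ∧ ∀ s x, x ∈ I → s * x ∈ I ∧ x * s ∈ I

/-- The Rees congruence associated to an ideal: identify all elements of `I`. -/
def reesCon {S : Type*} [Semigroup S] (I : Set S) (hI : IsIdeal I) : Con S where
  r x y := x = y ∨ (x ∈ I ∧ y ∈ I)
  iseqv := ⟨fun _ => Or.inl rfl,
    fun h => h.elim (fun h => Or.inl h.symm) (fun h => Or.inr ⟨h.2, h.1⟩),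
    fun h₁ h₂ => by
      rcases h₁ with h₁ | h₁
      · rwa [h₁]
      · rcases h₂ with h₂ | h₂
        · exact Or.inr ⟨h₁.1, h₂ ▸ h₁.2⟩
        · exact Or.inr ⟨h₁.1, h₂.2⟩⟩
  mul' := by
    intro a b c d h₁ h₂
    rcases h₁ with h₁ | h₁
    · rcases h₂ with h₂ | h₂
      · exact Or.inl (by rw [h₁, h₂])
      · exact Or.inr ⟨(hI.2 a c h₂.1).1, h₁ ▸ (hI.2 b d h₂.2).1⟩
    · exact Or.inr ⟨(hI.2 c a h₁.1).2, (hI.2 d b h₁.2).2⟩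

/-- `S` is minimal non-nilpotent: not Malcev nilpotent, but every proper subsemigroup and
every proper Rees factor semigroup is Malcev nilpotent. -/
def MinimalNonNilpotent (S : Type*) [Semigroup S] : Prop :=
  ¬ MalcevNilpotent S ∧
  (∀ T : Subsemigroup S, T ≠ ⊤ → MalcevNilpotent T) ∧
  (∀ (I : Set S) (hI : IsIdeal I), I.Nontrivial →
    MalcevNilpotent (reesCon I hI).Quotient)

/-- `θ` together with the injective family `E g i j ↔ (g; i, j)` realizes a copy of the
inverse Rees matrix semigroup `M⁰(G, n, n; I_n)` as an ideal of `S`. -/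
def IsReesIdeal {S : Type*} [Semigroup S] {G : Type*} [Group G] {n : ℕ}
    (θ : S) (E : G → Fin n → Fin n → S) : Prop :=
  (∀ s : S, s * θ = θ ∧ θ * s = θ) ∧
  Function.Injective (fun p : G × Fin n × Fin n => E p.1 p.2.1 p.2.2) ∧
  (θ ∉ Set.range fun p : G × Fin n × Fin n => E p.1 p.2.1 p.2.2) ∧
  (∀ g h i j k l, E g i j * E h k l = if j = k then E (g * h) i l else θ) ∧
  (∀ (s : S) g i j,
    (s * E g i j = θ ∨ ∃ g' i' j', s * E g i j = E g' i' j') ∧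
    (E g i j * s = θ ∨ ∃ g' i' j', E g i j * s = E g' i' j'))

/-- The underlying set of the Rees ideal `M = E(G × n × n) ∪ {θ}`. -/
def reesIdealSet {S : Type*} {G : Type*} {n : ℕ} (θ : S) (E : G → Fin n → Fin n → S) :
    Set S :=
  (Set.range fun p : G × Fin n × Fin n => E p.1 p.2.1 p.2.2) ∪ {θ}

section Aux

/-- A multiplicative hom commutes with the Malcev sequences. -/
lemma malcevLR_map {α β : Type*} [Mul α] [Mul β] (f : α → β)
    (hmul : ∀ x y, f (x * y) = f x * f y) (x y : α) (z : ℕ → α) :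
    ∀ k : ℕ, (malcevLR (f x) (f y) (f ∘ z) k).1 = f (malcevLR x y z k).1 ∧
      (malcevLR (f x) (f y) (f ∘ z) k).2 = f (malcevLR x y z k).2 := by
  intro k
  induction k with
  | zero => exact ⟨rfl, rfl⟩
  | succ k ih => simp [malcevLR, ih.1, ih.2, hmul, Function.comp]

/-- The Malcev sequences only depend on the first `k` interlacing elements. -/
lemma malcevLR_congr {α : Type*} [Mul α] (x y : α) (z z' : ℕ → α) :
    ∀ k : ℕ, (∀ i < k, z i = z' i) → malcevLR x y z k = malcevLR x y z' k := by
  intro k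
  induction k with
  | zero => intro _; rfl
  | succ k ih =>
    intro h
    have h1 := ih (fun i hi => h i (Nat.lt_succ_of_lt hi))
    simp [malcevLR, h1, h k (Nat.lt_succ_self k)]

open scoped commutatorElement in
lemma malcev_key {G : Type*} [Group G] (a b : G) (c : ℕ → G) (k : ℕ) :
    (malcevLR a b c (k+1)).1 * ((malcevLR a b c (k+1)).2)⁻¹ =
      ⁅(malcevLR a b c k).1 * ((malcevLR a b c k).2)⁻¹,
        (malcevLR a b c k).2 * c k⁆ := by
  simp only [malcevLR, commutatorElement_def]
  group

lemma malcev_mem_lcs {G : Type*} [Group G] (a b : G) (c : ℕ → G) :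
    ∀ k : ℕ, (malcevLR a b c k).1 * ((malcevLR a b c k).2)⁻¹ ∈ (⊤ : Subgroup G).lowerCentralSeries k := by
  intro k
  induction k with
  | zero => exact Subgroup.mem_top _
  | succ k ih =>
    rw [malcev_key, Subgroup.lowerCentralSeries_succ]
    exact Subgroup.commutator_mem_commutator ih (Subgroup.mem_top _)

lemma group_malcev_of_lcs {G : Type*} [Group G] {n : ℕ} (h : (⊤ : Subgroup G).lowerCentralSeries n = ⊥)
    (a b : G) (c : ℕ → G) : (malcevLR a b c n).1 = (malcevLR a b c n).2 := by
  have h2 := malcev_mem_lcs a b c n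
  rw [h, Subgroup.mem_bot, mul_inv_eq_one] at h2
  exact h2

/-- The Malcev identity at level `m` stated inside a group. -/
def GroupMalcev (G : Type*) [Group G] (m : ℕ) : Prop :=
  ∀ (a b : G) (c : ℕ → G), (malcevLR a b c m).1 = (malcevLR a b c m).2

lemma lcs_eq_bot_of_groupMalcev :
    ∀ (m : ℕ) (G : Type*) [Group G], GroupMalcev G m → (⊤ : Subgroup G).lowerCentralSeries m = ⊥ := by
  intro m
  induction m with
  | zero =>
    intro G _ h
    have hall : ∀ x : G, x = 1 := fun x => h x 1 (fun _ => 1)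
    ext x
    simp only [Subgroup.lowerCentralSeries_zero, Subgroup.mem_top, Subgroup.mem_bot, true_iff]
    exact hall x
  | succ m ih =>
    intro G _ h
    -- Step 1: each λ_m ρ_m⁻¹ is central.
    have hcen : ∀ (a b : G) (c : ℕ → G),
        (malcevLR a b c m).1 * ((malcevLR a b c m).2)⁻¹ ∈ Subgroup.center G := by
      intro a b c
      rw [Subgroup.mem_center_iff]
      intro g
      set lam := (malcevLR a b c m).1 with hlam
      set rho := (malcevLR a b c m).2 with hrho
      set c' : ℕ → G := fun i => if i = m then rho⁻¹ * g else c i with hc'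
      have hcongr : malcevLR a b c m = malcevLR a b c' m := by
        apply malcevLR_congr
        intro i hi
        simp [hc', Nat.ne_of_lt hi]
      have he := h a b c'
      simp only [malcevLR, ← hcongr, ← hlam, ← hrho] at he
      have hc'm : c' m = rho⁻¹ * g := by simp [hc']
      rw [hc'm] at he
      -- he : lam * (rho⁻¹ * g) * rho = rho * (rho⁻¹ * g) * lam
      refine mul_right_cancel (b := rho) ?_
      calc g * (lam * rho⁻¹) * rho = rho * (rho⁻¹ * g) * lam := by group
        _ = lam * (rho⁻¹ * g) * rho := he.symm
        _ = lam * rho⁻¹ * g * rho := by group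
    -- Step 2: the quotient by the center satisfies the identity at level m.
    let π := QuotientGroup.mk' (Subgroup.center G)
    have hsurj : Function.Surjective π := QuotientGroup.mk'_surjective _
    have hQ : GroupMalcev (G ⧸ Subgroup.center G) m := by
      intro a' b' c'
      obtain ⟨a, rfl⟩ := hsurj a'
      obtain ⟨b, rfl⟩ := hsurj b'
      choose cc hcc using fun i => hsurj (c' i)
      have hfc : π ∘ cc = c' := funext hcc
      have hmap := malcevLR_map (⇑π) (map_mul π) a b cc m
      rw [hfc] at hmap
      rw [hmap.1, hmap.2]
      have : π ((malcevLR a b cc m).1 * ((malcevLR a b cc m).2)⁻¹) = 1 := by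
        rw [← MonoidHom.mem_ker, QuotientGroup.ker_mk']
        exact hcen a b cc
      rw [map_mul, map_inv, mul_inv_eq_one] at this
      exact this
    -- Step 3: conclude.
    have hQbot := ih _ hQ
    have hle : (⊤ : Subgroup G).lowerCentralSeries m ≤ Subgroup.center G := by
      rw [← QuotientGroup.ker_mk' (Subgroup.center G), ← Subgroup.map_eq_bot_iff]
      exact le_bot_iff.mp (hQbot ▸ Subgroup.lowerCentralSeries.map π m)
    rw [eq_bot_iff, Subgroup.lowerCentralSeries_succ, Subgroup.commutator_def, Subgroup.closure_le]
    rintro x ⟨p, hp, q, -, rfl⟩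
    have hcomm := (Subgroup.mem_center_iff.mp (hle hp)) q
    simp only [SetLike.mem_coe, Subgroup.mem_bot, commutatorElement_def]
    rw [← hcomm]
    group

end Aux

section WithOneAux

lemma withOne_mul_ne_one {S : Type*} [Semigroup S] {x : WithOne S} (hx : x ≠ 1)
    (y : WithOne S) : x * y ≠ 1 := by
  obtain ⟨a, rfl⟩ := WithOne.ne_one_iff_exists.mp hx
  rcases eq_or_ne y 1 with rfl | hy
  · simp only [mul_one]; exact hx
  · obtain ⟨b, rfl⟩ := WithOne.ne_one_iff_exists.mp hy
    rw [← WithOne.coe_mul]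
    exact WithOne.coe_ne_one

lemma malcevLR_ne_one {S : Type*} [Semigroup S] (a b : S) (c : ℕ → WithOne S) :
    ∀ k : ℕ, (malcevLR (a : WithOne S) (b : WithOne S) c k).1 ≠ 1 ∧
      (malcevLR (a : WithOne S) (b : WithOne S) c k).2 ≠ 1 := by
  intro k
  induction k with
  | zero => exact ⟨WithOne.coe_ne_one, WithOne.coe_ne_one⟩
  | succ k ih =>
    refine ⟨?_, ?_⟩
    · exact withOne_mul_ne_one (withOne_mul_ne_one ih.1 _) _
    · exact withOne_mul_ne_one (withOne_mul_ne_one ih.2 _) _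

end WithOneAux

/-- A cancellative semigroup embedding in a nilpotent group of class `n` is Malcev nilpotent
of class at most `n`; in particular a nilpotent group of class `n` is Malcev nilpotent of
class exactly `n`. -/
theorem stmt_4 {S : Type*} [Semigroup S] [IsCancelMul S] {G : Type*} [Group G]
    [Group.IsNilpotent G] (n : ℕ) (hG : Group.nilpotencyClass G = n)
    (f : S →ₙ* G) (hf : Function.Injective f) :
    MalcevClassLe S n ∧
      ∀ (H : Type*) [Group H] [Group.IsNilpotent H], Group.nilpotencyClass H = n →
        MalcevClassLe H n ∧ ∀ m < n, ¬ MalcevClassLe H m := by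
  have hlcsG : (⊤ : Subgroup G).lowerCentralSeries n = ⊥ := by
    rw [← hG]; exact Subgroup.lowerCentralSeries_nilpotencyClass
  constructor
  · intro a b c
    let φ : WithOne S →* G := WithOne.lift f
    obtain ⟨x, hx⟩ := WithOne.ne_one_iff_exists.mp (malcevLR_ne_one a b c n).1
    obtain ⟨y, hy⟩ := WithOne.ne_one_iff_exists.mp (malcevLR_ne_one a b c n).2
    have hmap := malcevLR_map (⇑φ) (map_mul φ) (a : WithOne S) (b : WithOne S) c n
    have hg := group_malcev_of_lcs hlcsG (φ (a : WithOne S)) (φ (b : WithOne S)) (φ ∘ c)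
    rw [hmap.1, hmap.2, ← hx, ← hy] at hg
    have hfxy : f x = f y := by simpa [φ, WithOne.lift_coe] using hg
    rw [← hx, ← hy, hf hfxy]
  · intro H _ _ hH
    have hlcsH : (⊤ : Subgroup H).lowerCentralSeries n = ⊥ := by
      rw [← hH]; exact Subgroup.lowerCentralSeries_nilpotencyClass
    let φ : WithOne H →* H := WithOne.lift (MulHom.id H)
    have hφcoe : ∀ h : H, φ (h : WithOne H) = h := fun h => by
      simp [φ, WithOne.lift_coe]
    constructor
    · intro a b c
      obtain ⟨x, hx⟩ := WithOne.ne_one_iff_exists.mp (malcevLR_ne_one a b c n).1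
      obtain ⟨y, hy⟩ := WithOne.ne_one_iff_exists.mp (malcevLR_ne_one a b c n).2
      have hmap := malcevLR_map (⇑φ) (map_mul φ) (a : WithOne H) (b : WithOne H) c n
      have hg := group_malcev_of_lcs hlcsH (φ (a : WithOne H)) (φ (b : WithOne H)) (φ ∘ c)
      rw [hmap.1, hmap.2, ← hx, ← hy] at hg
      rw [hφcoe x, hφcoe y] at hg
      rw [← hx, ← hy, hg]
    · intro m hm hmal
      have hGM : GroupMalcev H m := by
        intro a b c
        have h2 := congrArg φ (hmal a b (fun i => (c i : WithOne H)))
        have hmap := malcevLR_map (⇑φ) (map_mul φ) (a : WithOne H) (b : WithOne H)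
          (fun i => (c i : WithOne H)) m
        rw [← hmap.1, ← hmap.2] at h2
        simpa only [hφcoe, Function.comp_def] using h2
      have hbot := lcs_eq_bot_of_groupMalcev m H hGM
      have hle := Subgroup.lowerCentralSeries_eq_bot_iff_nilpotencyClass_le.mp hbot
      omega
end

section
/- Let S be a finite minimal non-nilpotent semigroup with a proper ideal M = M^0(G, n, n; I_n), G a nilpotent group, n ≥ 2, with associated representation Γ. Then there exist elements w_1, w_2 ∈ S \ M and pairwise distinct indices l, m, m', k, k' in {1,...,n} such that one of the following holds: (i) Γ(w_1) swaps m and l, and Γ(w_2) fixes both m and l; (ii) Γ(w_1) sends m ↦ l ↦ m' and Γ(w_2) fixes l and sends m ↦ m'; (iii) Γ(w_1) sends k ↦ m and l ↦ k', while Γ(w_2) sends l ↦ m and k ↦ k'. -/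
set_option linter.unusedSectionVars false
section MalcevAux

variable {α : Type*} [Mul α]

theorem malcevLR_succ (x y : α) (c : ℕ → α) (n : ℕ) :
    malcevLR x y c (n+1) = ((malcevLR x y c n).1 * c n * (malcevLR x y c n).2,
      (malcevLR x y c n).2 * c n * (malcevLR x y c n).1) := rfl

theorem malcevLR_add (x y : α) (c : ℕ → α) (s : ℕ) :
    ∀ t, malcevLR x y c (s + t) =
      malcevLR (malcevLR x y c s).1 (malcevLR x y c s).2 (fun r => c (s + r)) t
  | 0 => rfl
  | t+1 => by
      rw [show s + (t+1) = (s+t)+1 from rfl, malcevLR_succ, malcevLR_succ,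
        malcevLR_add x y c s t]

theorem malcevLR_congr_s17 (x y : α) (c c' : ℕ → α) :
    ∀ n, (∀ t, t < n → c t = c' t) → malcevLR x y c n = malcevLR x y c' n
  | 0, _ => rfl
  | n+1, hcc => by
      rw [malcevLR_succ, malcevLR_succ,
        malcevLR_congr_s17 x y c c' n (fun t ht => hcc t (Nat.lt_succ_of_lt ht)),
        hcc n (Nat.lt_succ_self n)]

theorem malcevLR_map_s17 {β F : Type*} [Mul β] [FunLike F α β] [MulHomClass F α β]
    (f : F) (x y : α) (c : ℕ → α) :
    ∀ n, malcevLR (f x) (f y) (fun t => f (c t)) n =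
      (f (malcevLR x y c n).1, f (malcevLR x y c n).2)
  | 0 => rfl
  | n+1 => by
      rw [malcevLR_succ, malcevLR_succ, malcevLR_map_s17 f x y c n]
      simp [map_mul]

theorem malcevLR_prop (x y : α) (c : ℕ → α) (n : ℕ)
    (h : (malcevLR x y c n).1 = (malcevLR x y c n).2) :
    ∀ t, (malcevLR x y c (n + t)).1 = (malcevLR x y c (n + t)).2
  | 0 => h
  | t+1 => by
      rw [show n + (t+1) = (n+t)+1 from rfl, malcevLR_succ]
      simp [malcevLR_prop x y c n h t]

theorem malcevLR_pump (x y : α) (w : ℕ → α) (m : ℕ)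
    (hc : malcevLR x y w m = (x, y)) :
    ∀ q, malcevLR x y (fun t => w (t % m)) (q * m) = (x, y)
  | 0 => by rw [Nat.zero_mul]; rfl
  | q+1 => by
      have h1 := malcevLR_pump x y w m hc q
      have h2 := malcevLR_add x y (fun t => w (t % m)) (q * m) m
      rw [h1] at h2
      rw [show (q+1) * m = q * m + m from by ring, h2]
      have h3 : malcevLR x y (fun r => w ((q * m + r) % m)) m = malcevLR x y w m := by
        apply malcevLR_congr_s17
        intro r hr
        rw [Nat.mul_comm q m, Nat.mul_add_mod, Nat.mod_eq_of_lt hr]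
      exact h3.trans hc

theorem malcevLR_coe {S : Type*} [Semigroup S] (a b : S) (c : ℕ → WithOne S) :
    ∀ n, ∃ p q : S, malcevLR (a : WithOne S) (b : WithOne S) c n = (↑p, ↑q)
  | 0 => ⟨a, b, rfl⟩
  | n+1 => by
      obtain ⟨p, q, hpq⟩ := malcevLR_coe a b c n
      have hcm : ∀ (s : S) (z : WithOne S), ∃ t : S, (↑s * z : WithOne S) = ↑t := by
        intro s z
        refine WithOne.cases_on z ⟨s, mul_one _⟩ (fun u => ⟨s * u, (WithOne.coe_mul s u).symm⟩)
      rw [malcevLR_succ, hpq]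
      obtain ⟨p1, hp1⟩ := hcm p (c n)
      obtain ⟨q1, hq1⟩ := hcm q (c n)
      obtain ⟨p2, hp2⟩ := hcm p1 (↑q : WithOne S)
      obtain ⟨q2, hq2⟩ := hcm q1 (↑p : WithOne S)
      exact ⟨p2, q2, by simp only []; rw [hp1, hp2, hq1, hq2]⟩

end MalcevAux

section ReesAux

variable {S : Type*} [Semigroup S] {G : Type*} [Group G] {n : ℕ} {θ : S}
  {E : G → Fin n → Fin n → S}

theorem rees_ne (h : IsReesIdeal θ E) (g : G) (a b : Fin n) : E g a b ≠ θ :=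
  fun he => h.2.2.1 ⟨(g, a, b), he⟩

theorem rees_inj (h : IsReesIdeal θ E) {g g' : G} {a b a' b' : Fin n}
    (he : E g a b = E g' a' b') : g = g' ∧ a = a' ∧ b = b' := by
  have h2 := h.2.1 (a₁ := (g, a, b)) (a₂ := (g', a', b')) he
  simpa [Prod.ext_iff] using h2

theorem rees_col (h : IsReesIdeal θ E) {s : S} {b x : G} {k d p q : Fin n}
    (he : s * E b k d = E x p q) : q = d := by
  by_contra hq
  have h1 : E b k d * E 1 d d = E b k d := by rw [h.2.2.2.1]; simp
  have h2 : E x p q * E 1 d d = θ := by rw [h.2.2.2.1]; simp [hq]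
  have h3 : E x p q = θ := by
    calc E x p q = s * E b k d := he.symm
    _ = s * (E b k d * E 1 d d) := by rw [h1]
    _ = (s * E b k d) * E 1 d d := (mul_assoc _ _ _).symm
    _ = E x p q * E 1 d d := by rw [he]
    _ = θ := h2
  exact rees_ne h x p q h3

variable {Γ : S → Option (Fin n) → Option (Fin n)}

theorem rees_gamma
    (hΓ : ∀ s i i', Γ s (some i) = some i' ↔ ∃ g g' j, s * E g i j = E g' i' j)
    {s : S} {b x : G} {k d p : Fin n} (he : s * E b k d = E x p d) :
    Γ s (some k) = some p :=
  (hΓ s k p).mpr ⟨b, x, d, he⟩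

theorem rees_all (h : IsReesIdeal θ E)
    (hΓ : ∀ s i i', Γ s (some i) = some i' ↔ ∃ g g' j, s * E g i j = E g' i' j)
    {s : S} {i0 i' : Fin n}
    (hs : Γ s (some i0) = some i') (g : G) (j : Fin n) :
    ∃ g' : G, s * E g i0 j = E g' i' j := by
  obtain ⟨g0, g0', j0, he⟩ := (hΓ s i0 i').mp hs
  refine ⟨g0' * (g0⁻¹ * g), ?_⟩
  have h1 : E g0 i0 j0 * E (g0⁻¹ * g) j0 j = E g i0 j := by
    rw [h.2.2.2.1]; simp [mul_inv_cancel_left]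
  calc s * E g i0 j = s * (E g0 i0 j0 * E (g0⁻¹ * g) j0 j) := by rw [h1]
    _ = (s * E g0 i0 j0) * E (g0⁻¹ * g) j0 j := (mul_assoc _ _ _).symm
    _ = E g0' i' j0 * E (g0⁻¹ * g) j0 j := by rw [he]
    _ = E (g0' * (g0⁻¹ * g)) i' j := by rw [h.2.2.2.1]; simp

theorem rees_gamma_inj (h : IsReesIdeal θ E)
    (hΓ : ∀ s i i', Γ s (some i) = some i' ↔ ∃ g g' j, s * E g i j = E g' i' j)
    {s : S} {i1 i2 p : Fin n} (hne : i1 ≠ i2)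
    (h1 : Γ s (some i1) = some p) (h2 : Γ s (some i2) = some p) : False := by
  obtain ⟨u, hu⟩ := rees_all h hΓ h1 1 i1
  obtain ⟨v, hv⟩ := rees_all h hΓ h2 1 i2
  rcases (h.2.2.2.2 s 1 i1 p).2 with hθ' | ⟨w, q, r, hw⟩
  · have h3 : E (1 * u) i1 i1 = θ := by
      calc E (1 * u) i1 i1 = E 1 i1 p * E u p i1 := by rw [h.2.2.2.1]; simp
      _ = E 1 i1 p * (s * E 1 i1 i1) := by rw [hu]
      _ = (E 1 i1 p * s) * E 1 i1 i1 := (mul_assoc _ _ _).symm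
      _ = θ * E 1 i1 i1 := by rw [hθ']
      _ = θ := (h.1 _).2
    exact rees_ne h _ _ _ h3
  · have h4 : E w q r * E 1 i1 i1 = E (1 * u) i1 i1 := by
      calc E w q r * E 1 i1 i1 = (E 1 i1 p * s) * E 1 i1 i1 := by rw [hw]
      _ = E 1 i1 p * (s * E 1 i1 i1) := mul_assoc _ _ _
      _ = E 1 i1 p * E u p i1 := by rw [hu]
      _ = E (1 * u) i1 i1 := by rw [h.2.2.2.1]; simp
    have hr : r = i1 := by
      by_contra hr
      rw [h.2.2.2.1, if_neg hr] at h4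
      exact rees_ne h _ _ _ h4.symm
    have hri : r ≠ i2 := by rw [hr]; exact hne
    have h5 : E w q r * E 1 i2 i2 = θ := by rw [h.2.2.2.1, if_neg hri]
    have h6 : E w q r * E 1 i2 i2 = E (1 * v) i1 i2 := by
      calc E w q r * E 1 i2 i2 = (E 1 i1 p * s) * E 1 i2 i2 := by rw [hw]
      _ = E 1 i1 p * (s * E 1 i2 i2) := mul_assoc _ _ _
      _ = E 1 i1 p * E v p i2 := by rw [hv]
      _ = E (1 * v) i1 i2 := by rw [h.2.2.2.1]; simp
    exact rees_ne h _ _ _ (h6.symm.trans h5)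

theorem rees_notM (h : IsReesIdeal θ E)
    (hΓ : ∀ s i i', Γ s (some i) = some i' ↔ ∃ g g' j, s * E g i j = E g' i' j)
    {s : S} {p1 p2 q1 q2 : Fin n} (hne : p1 ≠ p2)
    (h1 : Γ s (some p1) = some q1) (h2 : Γ s (some p2) = some q2) :
    s ∉ reesIdealSet θ E := by
  intro hs
  simp only [reesIdealSet, Set.mem_union, Set.mem_range, Set.mem_singleton_iff] at hs
  obtain ⟨g1, he1⟩ := rees_all h hΓ h1 1 p1
  obtain ⟨g2, he2⟩ := rees_all h hΓ h2 1 p2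
  rcases hs with ⟨⟨v, a, b⟩, hp⟩ | rfl
  · have hp' : E v a b = s := hp
    rw [← hp'] at he1 he2
    have hb1 : b = p1 := by
      by_contra hb; rw [h.2.2.2.1, if_neg hb] at he1; exact rees_ne h _ _ _ he1.symm
    have hb2 : b = p2 := by
      by_contra hb; rw [h.2.2.2.1, if_neg hb] at he2; exact rees_ne h _ _ _ he2.symm
    exact hne (hb1.symm.trans hb2)
  · rw [(h.1 _).2] at he1
    exact rees_ne h _ _ _ he1.symm

theorem rees_comp (h : IsReesIdeal θ E)
    (hΓ : ∀ s i i', Γ s (some i) = some i' ↔ ∃ g g' j, s * E g i j = E g' i' j)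
    {s1 s2 : S} {p q r : Fin n}
    (h1 : Γ s1 (some p) = some q) (h2 : Γ s2 (some q) = some r) :
    Γ (s2 * s1) (some p) = some r := by
  obtain ⟨g1, he1⟩ := rees_all h hΓ h1 1 p
  obtain ⟨g2, he2⟩ := rees_all h hΓ h2 g1 p
  exact rees_gamma hΓ (show (s2 * s1) * E 1 p p = E g2 r p by rw [mul_assoc, he1, he2])

end ReesAux

def mcIdx {n : ℕ} (j l : Fin n) (t : ℕ) : Fin n := if t % 2 = 0 then j else l

theorem mcIdx_even {n : ℕ} {j l : Fin n} {t : ℕ} (ht : t % 2 = 0) : mcIdx j l t = j :=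
  if_pos ht

theorem mcIdx_odd {n : ℕ} {j l : Fin n} {t : ℕ} (ht : t % 2 = 1) : mcIdx j l t = l := by
  unfold mcIdx; rw [ht]; simp

theorem mcIdx_add_two {n : ℕ} {j l : Fin n} (t : ℕ) : mcIdx j l (t+2) = mcIdx j l t := by
  unfold mcIdx; rw [Nat.add_mod_right]


/-- In a finite minimal non-nilpotent semigroup with proper Rees ideal `M⁰(G,n,n;I_n)`,
there are `w₁, w₂ ∈ S \ M` whose images under `Γ` are of one of the three listed types. -/
theorem stmt_17 {S : Type*} [Semigroup S] [Finite S] {G : Type*} [Group G]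
    [Group.IsNilpotent G] {n : ℕ} (hn : 2 ≤ n)
    (θ : S) (E : G → Fin n → Fin n → S) (h : IsReesIdeal θ E)
    (hproper : reesIdealSet θ E ≠ Set.univ)
    (hmin : MinimalNonNilpotent S)
    (Γ : S → Option (Fin n) → Option (Fin n))
    (hΓ : ∀ s i i', Γ s (some i) = some i' ↔ ∃ g g' j, s * E g i j = E g' i' j)
    (hΓθ : ∀ s, Γ s none = none) :
    ∃ w₁ w₂ : S, w₁ ∉ reesIdealSet θ E ∧ w₂ ∉ reesIdealSet θ E ∧
      ((∃ m l : Fin n, m ≠ l ∧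
          Γ w₁ (some m) = some l ∧ Γ w₁ (some l) = some m ∧
          Γ w₂ (some m) = some m ∧ Γ w₂ (some l) = some l) ∨
       (∃ m l m' : Fin n, m ≠ l ∧ m ≠ m' ∧ l ≠ m' ∧
          Γ w₁ (some m) = some l ∧ Γ w₁ (some l) = some m' ∧
          Γ w₂ (some l) = some l ∧ Γ w₂ (some m) = some m') ∨
       (∃ k m l k' : Fin n, k ≠ m ∧ k ≠ l ∧ k ≠ k' ∧ m ≠ l ∧ m ≠ k' ∧ l ≠ k' ∧
          Γ w₁ (some k) = some m ∧ Γ w₁ (some l) = some k' ∧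
          Γ w₂ (some l) = some m ∧ Γ w₂ (some k) = some k')) := by
  classical
  obtain ⟨hnil, hsub, hquo⟩ := hmin
  have hmulE := h.2.2.2.1
  have hact := h.2.2.2.2
  have hzero := h.1
  -- θ is absorbing in WithOne S
  have θabs : ∀ z : WithOne S, ((θ : WithOne S) * z = ↑θ) ∧ (z * (θ : WithOne S) = ↑θ) := by
    intro z
    refine WithOne.cases_on z ⟨mul_one _, one_mul _⟩ (fun u => ⟨?_, ?_⟩)
    · rw [← WithOne.coe_mul, (hzero u).2]
    · rw [← WithOne.coe_mul, (hzero u).1]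
  have hθpair : ∀ (c' : ℕ → WithOne S) (t : ℕ),
      malcevLR (↑θ : WithOne S) (↑θ) c' t = (↑θ, ↑θ) := by
    intro c' t
    induction t with
    | zero => rfl
    | succ t ih =>
      rw [malcevLR_succ, ih]
      refine Prod.ext ?_ ?_
      · show (↑θ : WithOne S) * c' t * ↑θ = ↑θ
        rw [(θabs _).1, (θabs _).1]
      · show (↑θ : WithOne S) * c' t * ↑θ = ↑θ
        rw [(θabs _).1, (θabs _).1]
  -- Step 1 : find a cycle
  haveI := Fintype.ofFinite S
  haveI : Fintype (WithOne S) := inferInstanceAs (Fintype (Option S))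
  set N := Fintype.card (WithOne S × WithOne S) with hN
  have hnc : ¬ MalcevClassLe S (N + 1) := fun hc => hnil ⟨N + 1, Nat.le_add_left 1 N, hc⟩
  rw [MalcevClassLe] at hnc
  push_neg at hnc
  obtain ⟨a0, b0, c0, hab⟩ := hnc
  have hne : ∀ t, t ≤ N + 1 →
      (malcevLR (a0 : WithOne S) b0 c0 t).1 ≠ (malcevLR (a0 : WithOne S) b0 c0 t).2 := by
    intro t ht heq
    have h2 := malcevLR_prop _ _ c0 t heq (N + 1 - t)
    rw [Nat.add_sub_cancel' ht] at h2
    exact hab h2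
  obtain ⟨tp, tq, htpq, hfeq⟩ := Fintype.exists_ne_map_eq_of_card_lt
    (fun t : Fin (N + 1) => malcevLR (a0 : WithOne S) b0 c0 t)
    (by rw [Fintype.card_fin, ← hN]; exact Nat.lt_succ_self N)
  have hkey0 : ∃ p1 q1 : ℕ, p1 < q1 ∧ q1 ≤ N ∧
      malcevLR (a0 : WithOne S) b0 c0 p1 = malcevLR (a0 : WithOne S) b0 c0 q1 := by
    rcases lt_or_gt_of_ne htpq with hlt | hlt
    · exact ⟨tp, tq, hlt, Nat.lt_succ_iff.mp tq.isLt, hfeq⟩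
    · exact ⟨tq, tp, hlt, Nat.lt_succ_iff.mp tp.isLt, hfeq.symm⟩
  obtain ⟨p1, q1, hlt, hq1le, heq1⟩ := hkey0
  set m := q1 - p1 with hm
  have hm1 : 1 ≤ m := by omega
  obtain ⟨x, y, hxy0⟩ := malcevLR_coe a0 b0 c0 p1
  set w : ℕ → WithOne S := fun r => c0 (p1 + r) with hw
  have hcyc : malcevLR (x : WithOne S) y w m = (↑x, ↑y) := by
    have h2 := malcevLR_add (a0 : WithOne S) b0 c0 p1 m
    rw [show p1 + m = q1 by omega] at h2
    rw [← heq1, hxy0] at h2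
    exact h2.symm
  have hxyne : x ≠ y := by
    intro hh
    have h2 := hne p1 (by omega)
    rw [hxy0] at h2
    exact h2 (by rw [hh])
  clear hab hne hfeq heq1 hxy0 htpq
  -- Step 2 : the ideal
  have hMmem : ∀ (g : G) (a b : Fin n), E g a b ∈ reesIdealSet θ E :=
    fun g a b => Set.mem_union_left _ ⟨(g, a, b), rfl⟩
  have hθmem : θ ∈ reesIdealSet θ E := Set.mem_union_right _ rfl
  have hideal : IsIdeal (reesIdealSet θ E) := by
    refine ⟨⟨θ, hθmem⟩, ?_⟩
    intro s z hz
    simp only [reesIdealSet, Set.mem_union, Set.mem_range, Set.mem_singleton_iff] at hz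
    rcases hz with ⟨⟨g, a, b⟩, hp⟩ | rfl
    · have hp' : E g a b = z := hp
      subst hp'
      constructor
      · rcases (hact s g a b).1 with h1 | ⟨g', a', b', h1⟩
        · rw [h1]; exact hθmem
        · rw [h1]; exact hMmem _ _ _
      · rcases (hact s g a b).2 with h1 | ⟨g', a', b', h1⟩
        · rw [h1]; exact hθmem
        · rw [h1]; exact hMmem _ _ _
    · constructor
      · rw [(hzero s).1]; exact hθmem
      · rw [(hzero s).2]; exact hθmem
  have i0 : Fin n := ⟨0, by omega⟩
  have hnontriv : (reesIdealSet θ E).Nontrivial :=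
    ⟨θ, hθmem, E 1 i0 i0, hMmem 1 i0 i0, Ne.symm (rees_ne h 1 i0 i0)⟩
  -- Step 3 : x, y ∈ M via the Rees quotient
  obtain ⟨NQ, hNQ1, hNQ⟩ := hquo (reesIdealSet θ E) hideal hnontriv
  set cQ := reesCon (reesIdealSet θ E) hideal with hcQ
  set f : S →ₙ* cQ.Quotient := ⟨fun s => (s : cQ.Quotient), fun a b => rfl⟩ with hf
  set wp : ℕ → WithOne S := fun t => w (t % m) with hwp
  have hpump := malcevLR_pump (x : WithOne S) y w m hcyc
  have hKge : NQ ≤ NQ * m := Nat.le_mul_of_pos_right NQ hm1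
  have hQrun := hNQ (x : cQ.Quotient) (y : cQ.Quotient) (fun t => WithOne.mapMulHom f (wp t))
  have hQprop := malcevLR_prop _ _ _ NQ hQrun (NQ * m - NQ)
  rw [Nat.add_sub_cancel' hKge] at hQprop
  have hmap := malcevLR_map_s17 (WithOne.mapMulHom f) (↑x : WithOne S) (↑y) wp (NQ * m)
  rw [hpump NQ, WithOne.mapMulHom_coe, WithOne.mapMulHom_coe] at hmap
  have hfx : f x = (x : cQ.Quotient) := rfl
  have hfy : f y = (y : cQ.Quotient) := rfl
  rw [hfx, hfy] at hmap
  have hxyQ : ((x : cQ.Quotient) : WithOne cQ.Quotient) = ((y : cQ.Quotient) : WithOne cQ.Quotient) := by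
    have h2 := hQprop
    rw [hmap] at h2
    exact h2
  have hrel : cQ x y := (Con.eq cQ).mp (WithOne.coe_inj.mp hxyQ)
  have hrel' : x = y ∨ (x ∈ reesIdealSet θ E ∧ y ∈ reesIdealSet θ E) := hrel
  have hxyM : x ∈ reesIdealSet θ E ∧ y ∈ reesIdealSet θ E := by
    rcases hrel' with h1 | h1
    · exact absurd h1 hxyne
    · exact h1
  clear hQrun hQprop hmap hxyQ hrel hrel' hpump
  -- Step 4 : x, y are not θ
  have hxθ : x ≠ θ := by
    intro hh
    rw [hh] at hcyc hxyne
    have h1 : malcevLR (↑θ : WithOne S) ↑y w 1 = (↑θ, ↑θ) := by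
      rw [show (1 : ℕ) = 0 + 1 from rfl, malcevLR_succ]
      refine Prod.ext ?_ ?_
      · show (↑θ : WithOne S) * w 0 * ↑y = ↑θ
        rw [(θabs _).1, (θabs _).1]
      · show (↑y : WithOne S) * w 0 * ↑θ = ↑θ
        rw [(θabs _).2]
    have h2 := malcevLR_add (↑θ : WithOne S) ↑y w 1 (m - 1)
    rw [Nat.add_sub_cancel' hm1, h1] at h2
    have h3 : malcevLR (↑θ : WithOne S) ↑y w m = (↑θ, ↑θ) := by
      rw [h2]; exact hθpair _ _
    rw [hcyc] at h3
    exact hxyne (WithOne.coe_inj.mp (congrArg Prod.snd h3)).symm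
  have hyθ : y ≠ θ := by
    intro hh
    rw [hh] at hcyc hxyne
    have h1 : malcevLR (↑x : WithOne S) ↑θ w 1 = (↑θ, ↑θ) := by
      rw [show (1 : ℕ) = 0 + 1 from rfl, malcevLR_succ]
      refine Prod.ext ?_ ?_
      · show (↑x : WithOne S) * w 0 * ↑θ = ↑θ
        rw [(θabs _).2]
      · show (↑θ : WithOne S) * w 0 * ↑x = ↑θ
        rw [(θabs _).1, (θabs _).1]
    have h2 := malcevLR_add (↑x : WithOne S) ↑θ w 1 (m - 1)
    rw [Nat.add_sub_cancel' hm1, h1] at h2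
    have h3 : malcevLR (↑x : WithOne S) ↑θ w m = (↑θ, ↑θ) := by
      rw [h2]; exact hθpair _ _
    rw [hcyc] at h3
    exact hxyne (WithOne.coe_inj.mp (congrArg Prod.fst h3))
  obtain ⟨⟨g, i, j⟩, hx⟩ : ∃ p : G × Fin n × Fin n, E p.1 p.2.1 p.2.2 = x := by
    rcases hxyM.1 with h1 | h1
    · exact h1
    · exact absurd h1 hxθ
  obtain ⟨⟨g2, k, l⟩, hy⟩ : ∃ p : G × Fin n × Fin n, E p.1 p.2.1 p.2.2 = y := by
    rcases hxyM.2 with h1 | h1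
    · exact h1
    · exact absurd h1 hyθ
  have hx : E g i j = x := hx
  have hy : E g2 k l = y := hy
  -- Step 5 : structure of the cycle inside the Rees ideal
  have hnz : ∀ t, t ≤ m →
      (malcevLR (↑x : WithOne S) ↑y w t).1 ≠ ↑θ ∧ (malcevLR (↑x : WithOne S) ↑y w t).2 ≠ ↑θ := by
    have hstep : ∀ t, ((malcevLR (↑x : WithOne S) ↑y w t).1 = ↑θ ∨
        (malcevLR (↑x : WithOne S) ↑y w t).2 = ↑θ) →
        malcevLR (↑x : WithOne S) ↑y w (t+1) = (↑θ, ↑θ) := by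
      intro t ht
      rw [malcevLR_succ]
      rcases ht with ht | ht
      · rw [ht]
        refine Prod.ext ?_ ?_
        · show (↑θ : WithOne S) * w t * _ = ↑θ
          rw [(θabs _).1, (θabs _).1]
        · show _ * w t * (↑θ : WithOne S) = ↑θ
          rw [(θabs _).2]
      · rw [ht]
        refine Prod.ext ?_ ?_
        · show _ * w t * (↑θ : WithOne S) = ↑θ
          rw [(θabs _).2]
        · show (↑θ : WithOne S) * w t * _ = ↑θ
          rw [(θabs _).1, (θabs _).1]
    have hfin : ∀ t, t ≤ m → ((malcevLR (↑x : WithOne S) ↑y w t).1 = ↑θ ∨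
        (malcevLR (↑x : WithOne S) ↑y w t).2 = ↑θ) → False := by
      intro t htm hθt
      rcases eq_or_lt_of_le htm with heq | hlt2
      · subst heq
        rw [hcyc] at hθt
        rcases hθt with h1 | h1
        · exact hxθ (WithOne.coe_inj.mp h1)
        · exact hyθ (WithOne.coe_inj.mp h1)
      · have h1 := hstep t hθt
        have h2 := malcevLR_add (↑x : WithOne S) ↑y w (t+1) (m - (t+1))
        rw [Nat.add_sub_cancel' (by omega : t + 1 ≤ m), h1] at h2
        have h3 : malcevLR (↑x : WithOne S) ↑y w m = (↑θ, ↑θ) := by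
          rw [h2]; exact hθpair _ _
        rw [hcyc] at h3
        exact hxθ (WithOne.coe_inj.mp (congrArg Prod.fst h3))
    intro t htm
    constructor
    · exact fun hh => hfin t htm (Or.inl hh)
    · exact fun hh => hfin t htm (Or.inr hh)
  -- the transition lemma
  have hstepE : ∀ t, t < m → ∀ aa bb : G,
      (malcevLR (↑x : WithOne S) ↑y w t).1 = ↑(E aa i (mcIdx j l t)) →
      (malcevLR (↑x : WithOne S) ↑y w t).2 = ↑(E bb k (mcIdx j l (t+1))) →
      ∃ a' b' : G,
        (malcevLR (↑x : WithOne S) ↑y w (t+1)).1 = ↑(E a' i (mcIdx j l (t+1))) ∧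
        (malcevLR (↑x : WithOne S) ↑y w (t+1)).2 = ↑(E b' k (mcIdx j l (t+2))) ∧
        ((w t = 1 ∧ mcIdx j l t = k ∧ mcIdx j l (t+1) = i ∧ a' = aa * bb ∧ b' = bb * aa) ∨
         (∃ (u : S) (a2 b2 : G), w t = ↑u ∧
            u * E bb k (mcIdx j l (t+1)) = E b2 (mcIdx j l t) (mcIdx j l (t+1)) ∧
            u * E aa i (mcIdx j l t) = E a2 (mcIdx j l (t+1)) (mcIdx j l t) ∧
            a' = aa * b2 ∧ b' = bb * a2)) := by
    intro t htm aa bb hla hrb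
    have hnz1 := (hnz (t+1) (by omega)).1
    have hnz2 := (hnz (t+1) (by omega)).2
    have hL : (malcevLR (↑x : WithOne S) ↑y w (t+1)).1 =
        ↑(E aa i (mcIdx j l t)) * w t * ↑(E bb k (mcIdx j l (t+1))) := by
      rw [malcevLR_succ]
      show (malcevLR (↑x : WithOne S) ↑y w t).1 * w t * (malcevLR (↑x : WithOne S) ↑y w t).2 = _
      rw [hla, hrb]
    have hR : (malcevLR (↑x : WithOne S) ↑y w (t+1)).2 =
        ↑(E bb k (mcIdx j l (t+1))) * w t * ↑(E aa i (mcIdx j l t)) := by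
      rw [malcevLR_succ]
      show (malcevLR (↑x : WithOne S) ↑y w t).2 * w t * (malcevLR (↑x : WithOne S) ↑y w t).1 = _
      rw [hla, hrb]
    rcases eq_or_ne (w t) 1 with hw1 | hwne
    · rw [hw1, mul_one, ← WithOne.coe_mul, hmulE] at hL hR
      have hCk : mcIdx j l t = k := by
        by_contra hh; rw [if_neg hh] at hL; exact hnz1 hL
      have hCi : mcIdx j l (t+1) = i := by
        by_contra hh; rw [if_neg hh] at hR; exact hnz2 hR
      rw [if_pos hCk] at hL
      rw [if_pos hCi] at hR
      refine ⟨aa * bb, bb * aa, hL, ?_, Or.inl ⟨hw1, hCk, hCi, rfl, rfl⟩⟩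
      rw [mcIdx_add_two]; exact hR
    · obtain ⟨u, hu⟩ := WithOne.ne_one_iff_exists.mp hwne
      rw [← hu] at hL hR
      rcases (hact u bb k (mcIdx j l (t+1))).1 with h1 | ⟨b2, k2, l2, h1⟩
      · exfalso
        apply hnz1
        calc (malcevLR (↑x : WithOne S) ↑y w (t+1)).1
            = ↑(E aa i (mcIdx j l t)) * (↑u * ↑(E bb k (mcIdx j l (t+1)))) := by
              rw [hL, mul_assoc]
          _ = ↑(E aa i (mcIdx j l t)) * ↑(u * E bb k (mcIdx j l (t+1))) := by
              rw [WithOne.coe_mul]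
          _ = ↑(E aa i (mcIdx j l t)) * ↑θ := by rw [h1]
          _ = ↑θ := (θabs _).2
      have hl2 : l2 = mcIdx j l (t+1) := rees_col h h1
      subst hl2
      have hL2 : (malcevLR (↑x : WithOne S) ↑y w (t+1)).1 =
          ↑(if mcIdx j l t = k2 then E (aa * b2) i (mcIdx j l (t+1)) else θ) := by
        calc (malcevLR (↑x : WithOne S) ↑y w (t+1)).1
            = ↑(E aa i (mcIdx j l t)) * (↑u * ↑(E bb k (mcIdx j l (t+1)))) := by
              rw [hL, mul_assoc]
          _ = ↑(E aa i (mcIdx j l t)) * ↑(E b2 k2 (mcIdx j l (t+1))) := by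
              rw [← WithOne.coe_mul, h1]
          _ = ↑(E aa i (mcIdx j l t) * E b2 k2 (mcIdx j l (t+1))) := by
              rw [← WithOne.coe_mul]
          _ = _ := by rw [hmulE]
      have hk2 : mcIdx j l t = k2 := by
        by_contra hh; rw [if_neg hh] at hL2; exact hnz1 hL2
      rw [if_pos hk2] at hL2
      rcases (hact u aa i (mcIdx j l t)).1 with h2 | ⟨a2, i2, l3, h2⟩
      · exfalso
        apply hnz2
        calc (malcevLR (↑x : WithOne S) ↑y w (t+1)).2
            = ↑(E bb k (mcIdx j l (t+1))) * (↑u * ↑(E aa i (mcIdx j l t))) := by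
              rw [hR, mul_assoc]
          _ = ↑(E bb k (mcIdx j l (t+1))) * ↑(u * E aa i (mcIdx j l t)) := by
              rw [WithOne.coe_mul]
          _ = ↑(E bb k (mcIdx j l (t+1))) * ↑θ := by rw [h2]
          _ = ↑θ := (θabs _).2
      have hl3 : l3 = mcIdx j l t := rees_col h h2
      subst hl3
      have hR2 : (malcevLR (↑x : WithOne S) ↑y w (t+1)).2 =
          ↑(if mcIdx j l (t+1) = i2 then E (bb * a2) k (mcIdx j l t) else θ) := by
        calc (malcevLR (↑x : WithOne S) ↑y w (t+1)).2
            = ↑(E bb k (mcIdx j l (t+1))) * (↑u * ↑(E aa i (mcIdx j l t))) := by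
              rw [hR, mul_assoc]
          _ = ↑(E bb k (mcIdx j l (t+1))) * ↑(E a2 i2 (mcIdx j l t)) := by
              rw [← WithOne.coe_mul, h2]
          _ = ↑(E bb k (mcIdx j l (t+1)) * E a2 i2 (mcIdx j l t)) := by
              rw [← WithOne.coe_mul]
          _ = _ := by rw [hmulE]
      have hi2 : mcIdx j l (t+1) = i2 := by
        by_contra hh; rw [if_neg hh] at hR2; exact hnz2 hR2
      rw [if_pos hi2] at hR2
      refine ⟨aa * b2, bb * a2, hL2, ?_, Or.inr ⟨u, a2, b2, hu.symm, ?_, ?_, rfl, rfl⟩⟩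
      · rw [mcIdx_add_two]; exact hR2
      · rw [← hk2] at h1; exact h1
      · rw [← hi2] at h2; exact h2
  -- the full description of the cycle
  have hkeyE : ∀ t, t ≤ m → ∃ aa bb : G,
      (malcevLR (↑x : WithOne S) ↑y w t).1 = ↑(E aa i (mcIdx j l t)) ∧
      (malcevLR (↑x : WithOne S) ↑y w t).2 = ↑(E bb k (mcIdx j l (t+1))) := by
    intro t
    induction t with
    | zero =>
      intro _
      refine ⟨g, g2, ?_, ?_⟩
      · rw [mcIdx_even (by norm_num : (0:ℕ) % 2 = 0)]
        show (↑x : WithOne S) = ↑(E g i j)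
        rw [hx]
      · rw [mcIdx_odd (by norm_num : (1:ℕ) % 2 = 1)]
        show (↑y : WithOne S) = ↑(E g2 k l)
        rw [hy]
    | succ t ih =>
      intro ht1
      obtain ⟨aa, bb, h1, h2⟩ := ih (by omega)
      obtain ⟨a', b', h3, h4, _⟩ := hstepE t (by omega) aa bb h1 h2
      exact ⟨a', b', h3, h4⟩
  choose! aseq bseq ha hb using hkeyE
  have hcon : ∀ t, t < m →
      (w t = 1 ∧ mcIdx j l t = k ∧ mcIdx j l (t+1) = i ∧
        aseq (t+1) = aseq t * bseq t ∧ bseq (t+1) = bseq t * aseq t) ∨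
      (∃ (u : S) (a2 b2 : G), w t = ↑u ∧
        u * E (bseq t) k (mcIdx j l (t+1)) = E b2 (mcIdx j l t) (mcIdx j l (t+1)) ∧
        u * E (aseq t) i (mcIdx j l t) = E a2 (mcIdx j l (t+1)) (mcIdx j l t) ∧
        aseq (t+1) = aseq t * b2 ∧ bseq (t+1) = bseq t * a2) := by
    intro t ht
    obtain ⟨a', b', h3, h4, hd⟩ := hstepE t ht (aseq t) (bseq t) (ha t (by omega)) (hb t (by omega))
    have he1 : aseq (t+1) = a' := by
      have h5 := (ha (t+1) (by omega)).symm.trans h3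
      exact (rees_inj h (WithOne.coe_inj.mp h5)).1
    have he2 : bseq (t+1) = b' := by
      have h5 := (hb (t+1) (by omega)).symm.trans h4
      exact (rees_inj h (WithOne.coe_inj.mp h5)).1
    rcases hd with ⟨hw1, hCk, hCi, ha', hb'⟩ | ⟨u, a2, b2, hu, hp1, hp2, ha', hb'⟩
    · exact Or.inl ⟨hw1, hCk, hCi, by rw [he1, ha'], by rw [he2, hb']⟩
    · exact Or.inr ⟨u, a2, b2, hu, hp1, hp2, by rw [he1, ha'], by rw [he2, hb']⟩
  have hCm : mcIdx j l m = j ∧ aseq m = g := by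
    have h1 : (malcevLR (↑x : WithOne S) ↑y w m).1 = ↑x := by rw [hcyc]
    have h2 := (ha m (le_refl m)).symm.trans h1
    rw [← hx] at h2
    have h3 := rees_inj h (WithOne.coe_inj.mp h2)
    exact ⟨h3.2.2, h3.1⟩
  have hCm1 : mcIdx j l (m+1) = l ∧ bseq m = g2 := by
    have h1 : (malcevLR (↑x : WithOne S) ↑y w m).2 = ↑y := by rw [hcyc]
    have h2 := (hb m (le_refl m)).symm.trans h1
    rw [← hy] at h2
    have h3 := rees_inj h (WithOne.coe_inj.mp h2)
    exact ⟨h3.2.2, h3.1⟩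
  by_cases hik : i = k
  · -- degenerate case : contradiction via the copy of G inside the ideal
    exfalso
    subst hik
    have hC0 : mcIdx j l 0 = j := mcIdx_even (by norm_num)
    have hC1 : mcIdx j l 1 = l := mcIdx_odd (by norm_num)
    have hjl : j = l := by
      rcases hcon 0 (by omega) with ⟨_, h1, h2, _, _⟩ | ⟨u, a2, b2, _, hp1, hp2, _, _⟩
      · rw [hC0] at h1; rw [hC1] at h2; rw [h1, h2]
      · have hg1 : Γ u (some i) = some (mcIdx j l 0) := rees_gamma hΓ hp1
        have hg2 : Γ u (some i) = some (mcIdx j l 1) := rees_gamma hΓ hp2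
        have h3 := Option.some.inj (hg1.symm.trans hg2)
        rw [hC0, hC1] at h3; exact h3
    have hCC : ∀ s : ℕ, mcIdx j l s = j := by
      intro s; unfold mcIdx; split
      · rfl
      · exact hjl.symm
    have hG : g ≠ g2 := by
      intro hh
      exact hxyne (by rw [← hx, ← hy, hh, hjl])
    have hesq : ∀ t, t < m → ∃ e : G,
        aseq (t+1) = aseq t * e * bseq t ∧ bseq (t+1) = bseq t * e * aseq t := by
      intro t ht
      rcases hcon t ht with ⟨_, _, _, ha', hb'⟩ | ⟨u, a2, b2, _, hp1, hp2, ha', hb'⟩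
      · exact ⟨1, by rw [ha']; group, by rw [hb']; group⟩
      · simp only [hCC] at hp1 hp2
        have hkey2 : a2 = b2 * ((bseq t)⁻¹ * aseq t) := by
          have hsplit : E (aseq t) i j = E (bseq t) i j * E ((bseq t)⁻¹ * aseq t) j j := by
            rw [hmulE]; simp [mul_inv_cancel_left]
          have h5 : u * E (aseq t) i j = E (b2 * ((bseq t)⁻¹ * aseq t)) j j := by
            rw [hsplit, ← mul_assoc, hp1, hmulE]; simp
          rw [hp2] at h5
          exact (rees_inj h h5).1
        refine ⟨b2 * (bseq t)⁻¹, ?_, ?_⟩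
        · rw [ha']; group
        · rw [hb', hkey2]; group
    choose! eseq he using hesq
    set ee : ℕ → G := fun t => eseq (t % m) with hee
    have hblock : ∀ s, s ≤ m → malcevLR g g2 ee s = (aseq s, bseq s) := by
      intro s
      induction s with
      | zero =>
        intro _
        have ha0 : aseq 0 = g := by
          have h1 : (malcevLR (↑x : WithOne S) ↑y w 0).1 = ↑x := rfl
          have h2 := (ha 0 (by omega)).symm.trans h1
          rw [← hx] at h2
          exact (rees_inj h (WithOne.coe_inj.mp h2)).1
        have hb0 : bseq 0 = g2 := by
          have h1 : (malcevLR (↑x : WithOne S) ↑y w 0).2 = ↑y := rfl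
          have h2 := (hb 0 (by omega)).symm.trans h1
          rw [← hy] at h2
          exact (rees_inj h (WithOne.coe_inj.mp h2)).1
        rw [ha0, hb0]; rfl
      | succ s ih =>
        intro hs1
        rw [malcevLR_succ, ih (by omega)]
        have hes : ee s = eseq s := by
          rw [hee]; show eseq (s % m) = eseq s; rw [Nat.mod_eq_of_lt (by omega)]
        refine Prod.ext ?_ ?_
        · show aseq s * ee s * bseq s = aseq (s+1)
          rw [hes, (he s (by omega)).1]
        · show bseq s * ee s * aseq s = bseq (s+1)
          rw [hes, (he s (by omega)).2]
    have hcycG : malcevLR g g2 ee m = (g, g2) := by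
      rw [hblock m (le_refl m), hCm.2, hCm1.2]
    have hpumpG := malcevLR_pump g g2 ee m hcycG
    have hee2 : (fun t => ee (t % m)) = ee := by
      funext t
      show eseq (t % m % m) = eseq (t % m)
      rw [Nat.mod_eq_of_lt (Nat.mod_lt t hm1)]
    rw [hee2] at hpumpG
    set T : Subsemigroup S :=
      { carrier := {s | ∃ u : G, E u i i = s},
        mul_mem' := by
          rintro s1 s2 ⟨u1, rfl⟩ ⟨u2, rfl⟩
          exact ⟨u1 * u2, by rw [hmulE]; simp⟩ } with hT
    have hTne : T ≠ ⊤ := by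
      intro hT'
      have hθT : θ ∈ T := by rw [hT']; trivial
      obtain ⟨u, hu⟩ := hθT
      exact rees_ne h u i i hu
    obtain ⟨NT, hNT1, hNT⟩ := hsub T hTne
    have hTmem : ∀ u : G, E u i i ∈ T := fun u => ⟨u, rfl⟩
    set xT : T := ⟨E g i i, hTmem g⟩ with hxT
    set yT : T := ⟨E g2 i i, hTmem g2⟩ with hyT
    set cT : ℕ → WithOne T := fun t => ((⟨E (ee t) i i, hTmem (ee t)⟩ : T) : WithOne T) with hcT
    have hTrun : ∀ t, malcevLR (xT : WithOne T) yT cT t =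
        (((⟨E ((malcevLR g g2 ee t).1) i i, hTmem _⟩ : T) : WithOne T),
         ((⟨E ((malcevLR g g2 ee t).2) i i, hTmem _⟩ : T) : WithOne T)) := by
      intro t
      induction t with
      | zero => rfl
      | succ t ih =>
        rw [malcevLR_succ (xT : WithOne T) yT cT t, malcevLR_succ g g2 ee t, ih]
        refine Prod.ext ?_ ?_
        · show ((⟨E ((malcevLR g g2 ee t).1) i i, hTmem _⟩ : T) : WithOne T) * cT t *
              ((⟨E ((malcevLR g g2 ee t).2) i i, hTmem _⟩ : T) : WithOne T) = _
          rw [hcT]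
          show (_ : WithOne T) = ((⟨E ((malcevLR g g2 ee t).1 * ee t * (malcevLR g g2 ee t).2) i i, hTmem _⟩ : T) : WithOne T)
          rw [← WithOne.coe_mul, ← WithOne.coe_mul]
          refine congrArg _ ?_
          apply Subtype.ext
          show E ((malcevLR g g2 ee t).1) i i * E (ee t) i i * E ((malcevLR g g2 ee t).2) i i = _
          simp [hmulE]
        · show ((⟨E ((malcevLR g g2 ee t).2) i i, hTmem _⟩ : T) : WithOne T) * cT t *
              ((⟨E ((malcevLR g g2 ee t).1) i i, hTmem _⟩ : T) : WithOne T) = _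
          rw [hcT]
          show (_ : WithOne T) = ((⟨E ((malcevLR g g2 ee t).2 * ee t * (malcevLR g g2 ee t).1) i i, hTmem _⟩ : T) : WithOne T)
          rw [← WithOne.coe_mul, ← WithOne.coe_mul]
          refine congrArg _ ?_
          apply Subtype.ext
          show E ((malcevLR g g2 ee t).2) i i * E (ee t) i i * E ((malcevLR g g2 ee t).1) i i = _
          simp [hmulE]
    have hNTeq := hNT xT yT cT
    rw [hTrun NT] at hNTeq
    have hPG : (malcevLR g g2 ee NT).1 = (malcevLR g g2 ee NT).2 := by
      have h5 : ((⟨E ((malcevLR g g2 ee NT).1) i i, hTmem _⟩ : T) : WithOne T) =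
          ((⟨E ((malcevLR g g2 ee NT).2) i i, hTmem _⟩ : T) : WithOne T) := hNTeq
      have h6 := Subtype.ext_iff.mp (WithOne.coe_inj.mp h5)
      exact (rees_inj h h6).1
    have hprop2 := malcevLR_prop g g2 ee NT hPG ((NT+1) * m - NT)
    have hNTle : NT ≤ (NT+1) * m := by
      have := Nat.le_mul_of_pos_right (NT+1) hm1
      omega
    rw [Nat.add_sub_cancel' hNTle] at hprop2
    rw [hpumpG (NT+1)] at hprop2
    exact hG hprop2
  · -- main case : i ≠ k
    have hC0 : mcIdx j l 0 = j := mcIdx_even (by norm_num)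
    have hC1 : mcIdx j l 1 = l := mcIdx_odd (by norm_num)
    have hC2 : mcIdx j l 2 = j := mcIdx_even (by norm_num)
    have hw0 : (j = k ∧ l = i) ∨ ∃ u : S, u ∉ reesIdealSet θ E ∧
        Γ u (some k) = some j ∧ Γ u (some i) = some l := by
      rcases hcon 0 (by omega) with ⟨_, h1, h2, _, _⟩ | ⟨u, a2, b2, _, hp1, hp2, _, _⟩
      · rw [hC0] at h1; rw [hC1] at h2; exact Or.inl ⟨h1, h2⟩
      · rw [hC0, hC1] at hp1 hp2
        have hg1 : Γ u (some k) = some j := rees_gamma hΓ hp1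
        have hg2 : Γ u (some i) = some l := rees_gamma hΓ hp2
        exact Or.inr ⟨u, rees_notM h hΓ hik hg2 hg1, hg1, hg2⟩
    have hjl : j ≠ l := by
      intro hh
      rcases hw0 with ⟨h1, h2⟩ | ⟨u, _, hg1, hg2⟩
      · exact hik (by rw [← h2, ← hh, h1])
      · rw [← hh] at hg2
        exact rees_gamma_inj h hΓ hik hg2 hg1
    have hm2 : 1 < m := by
      rcases Nat.lt_or_ge 1 m with h' | h'
      · exact h'
      · exfalso
        have hm' : m = 1 := by omega
        have h1 := hCm.1
        rw [hm', hC1] at h1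
        exact hjl h1.symm
    have hw1 : (l = k ∧ j = i) ∨ ∃ u : S, u ∉ reesIdealSet θ E ∧
        Γ u (some k) = some l ∧ Γ u (some i) = some j := by
      rcases hcon 1 (by omega) with ⟨_, h1, h2, _, _⟩ | ⟨u, a2, b2, _, hp1, hp2, _, _⟩
      · rw [hC1] at h1; rw [show (1:ℕ)+1 = 2 from rfl, hC2] at h2; exact Or.inl ⟨h1, h2⟩
      · rw [hC1, show (1:ℕ)+1 = 2 from rfl, hC2] at hp1 hp2
        have hg1 : Γ u (some k) = some l := rees_gamma hΓ hp1
        have hg2 : Γ u (some i) = some j := rees_gamma hΓ hp2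
        exact Or.inr ⟨u, rees_notM h hΓ hik hg2 hg1, hg1, hg2⟩
    by_cases hji : j = i
    · -- j = i
      have hu0 : ∃ u : S, u ∉ reesIdealSet θ E ∧
          Γ u (some k) = some j ∧ Γ u (some i) = some l := by
        rcases hw0 with ⟨h1, _⟩ | h2
        · exact absurd (hji.symm.trans h1) hik
        · exact h2
      obtain ⟨u0, hu0M, hu0k, hu0i⟩ := hu0
      by_cases hlk : l = k
      · -- case (a1) : u0 swaps k and i
        have hk1 : Γ u0 (some k) = some i := by rw [hu0k, hji]
        have hk2 : Γ u0 (some i) = some k := by rw [hu0i, hlk]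
        have hsq1 : Γ (u0 * u0) (some k) = some k := rees_comp h hΓ hk1 hk2
        have hsq2 : Γ (u0 * u0) (some i) = some i := rees_comp h hΓ hk2 hk1
        exact ⟨u0, u0 * u0, hu0M, rees_notM h hΓ hik hsq2 hsq1,
          Or.inl ⟨k, i, Ne.symm hik, hk1, hk2, hsq1, hsq2⟩⟩
      · -- case (b1)
        have hli : l ≠ i := fun hh => hjl (hji.trans hh.symm)
        have hu1 : ∃ u : S, u ∉ reesIdealSet θ E ∧
            Γ u (some k) = some l ∧ Γ u (some i) = some j := by
          rcases hw1 with ⟨h1, _⟩ | h2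
          · exact absurd h1 hlk
          · exact h2
        obtain ⟨u1, hu1M, hu1k, hu1i⟩ := hu1
        refine ⟨u0, u1, hu0M, hu1M, Or.inr (Or.inl
          ⟨k, i, l, Ne.symm hik, Ne.symm hlk, Ne.symm hli, ?_, hu0i, ?_, hu1k⟩)⟩
        · rw [hu0k, hji]
        · rw [hu1i, hji]
    · -- j ≠ i
      by_cases hli : l = i
      · by_cases hjk : j = k
        · -- case (a2) : u1 swaps k and i
          have hu1 : ∃ u : S, u ∉ reesIdealSet θ E ∧
              Γ u (some k) = some l ∧ Γ u (some i) = some j := by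
            rcases hw1 with ⟨h1, _⟩ | h2
            · exact absurd (hli.symm.trans h1) hik
            · exact h2
          obtain ⟨u1, hu1M, hu1k, hu1i⟩ := hu1
          have hk1 : Γ u1 (some k) = some i := by rw [hu1k, hli]
          have hk2 : Γ u1 (some i) = some k := by rw [hu1i, hjk]
          have hsq1 : Γ (u1 * u1) (some k) = some k := rees_comp h hΓ hk1 hk2
          have hsq2 : Γ (u1 * u1) (some i) = some i := rees_comp h hΓ hk2 hk1
          exact ⟨u1, u1 * u1, hu1M, rees_notM h hΓ hik hsq2 hsq1,
            Or.inl ⟨k, i, Ne.symm hik, hk1, hk2, hsq1, hsq2⟩⟩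
        · -- case (b2)
          have hu0 : ∃ u : S, u ∉ reesIdealSet θ E ∧
              Γ u (some k) = some j ∧ Γ u (some i) = some l := by
            rcases hw0 with ⟨h1, _⟩ | h2
            · exact absurd h1 hjk
            · exact h2
          have hu1 : ∃ u : S, u ∉ reesIdealSet θ E ∧
              Γ u (some k) = some l ∧ Γ u (some i) = some j := by
            rcases hw1 with ⟨h1, _⟩ | h2
            · exact absurd (hli.symm.trans h1) hik
            · exact h2
          obtain ⟨u0, hu0M, hu0k, hu0i⟩ := hu0
          obtain ⟨u1, hu1M, hu1k, hu1i⟩ := hu1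
          refine ⟨u1, u0, hu1M, hu0M, Or.inr (Or.inl
            ⟨k, i, j, Ne.symm hik, Ne.symm hjk, Ne.symm hji, ?_, hu1i, ?_, hu0k⟩)⟩
          · rw [hu1k, hli]
          · rw [hu0i, hli]
      · by_cases hjk : j = k
        · -- case (b3)
          have hlk : l ≠ k := fun hh => hjl (hjk.trans hh.symm)
          have hu0 : ∃ u : S, u ∉ reesIdealSet θ E ∧
              Γ u (some k) = some j ∧ Γ u (some i) = some l := by
            rcases hw0 with ⟨_, h2⟩ | h2
            · exact absurd h2 hli
            · exact h2
          have hu1 : ∃ u : S, u ∉ reesIdealSet θ E ∧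
              Γ u (some k) = some l ∧ Γ u (some i) = some j := by
            rcases hw1 with ⟨h1, _⟩ | h2
            · exact absurd h1 hlk
            · exact h2
          obtain ⟨u0, hu0M, hu0k, hu0i⟩ := hu0
          obtain ⟨u1, hu1M, hu1k, hu1i⟩ := hu1
          refine ⟨u1, u0, hu1M, hu0M, Or.inr (Or.inl
            ⟨i, k, l, hik, Ne.symm hli, Ne.symm hlk, ?_, hu1k, ?_, hu0i⟩)⟩
          · rw [hu1i, hjk]
          · rw [hu0k, hjk]
        · by_cases hlk : l = k
          · -- case (b4)
            have hu0 : ∃ u : S, u ∉ reesIdealSet θ E ∧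
                Γ u (some k) = some j ∧ Γ u (some i) = some l := by
              rcases hw0 with ⟨h1, _⟩ | h2
              · exact absurd h1 hjk
              · exact h2
            have hu1 : ∃ u : S, u ∉ reesIdealSet θ E ∧
                Γ u (some k) = some l ∧ Γ u (some i) = some j := by
              rcases hw1 with ⟨_, h2⟩ | h2
              · exact absurd h2 hji
              · exact h2
            obtain ⟨u0, hu0M, hu0k, hu0i⟩ := hu0
            obtain ⟨u1, hu1M, hu1k, hu1i⟩ := hu1
            refine ⟨u0, u1, hu0M, hu1M, Or.inr (Or.inl
              ⟨i, k, j, hik, Ne.symm hji, Ne.symm hjk, ?_, hu0k, ?_, hu1i⟩)⟩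
            · rw [hu0i, hlk]
            · rw [hu1k, hlk]
          · -- case (c) : all four indices distinct
            have hu0 : ∃ u : S, u ∉ reesIdealSet θ E ∧
                Γ u (some k) = some j ∧ Γ u (some i) = some l := by
              rcases hw0 with ⟨h1, _⟩ | h2
              · exact absurd h1 hjk
              · exact h2
            have hu1 : ∃ u : S, u ∉ reesIdealSet θ E ∧
                Γ u (some k) = some l ∧ Γ u (some i) = some j := by
              rcases hw1 with ⟨h1, _⟩ | h2
              · exact absurd h1 hlk
              · exact h2
            obtain ⟨u0, hu0M, hu0k, hu0i⟩ := hu0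
            obtain ⟨u1, hu1M, hu1k, hu1i⟩ := hu1
            exact ⟨u0, u1, hu0M, hu1M, Or.inr (Or.inr
              ⟨k, j, i, l, Ne.symm hjk, Ne.symm hik, Ne.symm hlk,
                hji, hjl, Ne.symm hli, hu0k, hu0i, hu1i, hu1k⟩)⟩
end
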